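/- Let ρ be a positive definite operator and V a nonzero operator on a finite-dimensional complex Hilbert space such that tr(ρ^{1/2}V*ρ^{1/2}V) > 0 and tr(ρ^{1/2}V*ρ^{1/2}V)² = tr(ρV*V)·tr(ρVV*), and let γ⁻, γ⁺ > 0 satisfy γ⁻·tr(ρV*V) = γ⁺·tr(ρVV*). Then (γ⁺)^{1/2} ρ^{1/2} V = (γ⁻)^{1/2} V ρ^{1/2}. -/

import Mathlib

open Matrix ComplexOrder

/-- The positive semidefinite square root of a positive semidefinite matrix, as defined in
Mathlib of December 2024 (`Matrix.PosSemidef.sqrt`, since removed from Mathlib). -/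
noncomputable def Matrix.PosSemidef.sqrt {n 𝕜 : Type*} [Fintype n] [DecidableEq n] [RCLike 𝕜]
    {A : Matrix n n 𝕜} (hA : A.PosSemidef) : Matrix n n 𝕜 :=
  (hA.1.eigenvectorUnitary : Matrix n n 𝕜) * diagonal ((↑) ∘ (fun x => Real.sqrt x) ∘ hA.1.eigenvalues) *
    (star hA.1.eigenvectorUnitary : Matrix n n 𝕜)

lemma psd_sqrt_herm {n : Type*} [Fintype n] [DecidableEq n]
    {A : Matrix n n ℂ} (hA : A.PosSemidef) : hA.sqrt ᴴ = hA.sqrt := by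
  simp only [Matrix.PosSemidef.sqrt, conjTranspose_mul, diagonal_conjTranspose, mul_assoc]
  congr 2
  · ext i j; simp
  · simp

lemma psd_sqrt_mul_self {n : Type*} [Fintype n] [DecidableEq n]
    {A : Matrix n n ℂ} (hA : A.PosSemidef) : hA.sqrt * hA.sqrt = A := by
  have hU : (star hA.1.eigenvectorUnitary : Matrix n n ℂ) * (hA.1.eigenvectorUnitary : Matrix n n ℂ) = 1 :=
    Matrix.UnitaryGroup.star_mul_self _
  have hD : diagonal ((RCLike.ofReal : ℝ → ℂ) ∘ (fun x => Real.sqrt x) ∘ hA.1.eigenvalues) *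
      diagonal ((RCLike.ofReal : ℝ → ℂ) ∘ (fun x => Real.sqrt x) ∘ hA.1.eigenvalues) =
      diagonal ((RCLike.ofReal : ℝ → ℂ) ∘ hA.1.eigenvalues) := by
    rw [diagonal_mul_diagonal]; congr 1; funext i
    simp only [Function.comp]
    rw [← RCLike.ofReal_mul, Real.mul_self_sqrt (hA.eigenvalues_nonneg i)]
  conv_rhs => rw [hA.1.spectral_theorem, Unitary.conjStarAlgAut_apply]
  simp only [Matrix.PosSemidef.sqrt]
  rw [show ∀ a b c d e f : Matrix n n ℂ, a * b * c * (d * e * f) = a * (b * (c * d) * e) * f by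
    intros; simp only [mul_assoc], hU, mul_one, hD]

noncomputable def emb {d : ℕ} (M : Matrix (Fin d) (Fin d) ℂ) :
    EuclideanSpace ℂ (Fin d × Fin d) := WithLp.toLp 2 (fun p => M p.1 p.2)

lemma inner_emb {d : ℕ} (M N : Matrix (Fin d) (Fin d) ℂ) :
    (inner ℂ (emb M) (emb N) : ℂ) = (Mᴴ * N).trace := by
  simp only [PiLp.inner_apply, RCLike.inner_apply, emb, PiLp.toLp_apply, Matrix.trace, Matrix.diag,
    Matrix.mul_apply, conjTranspose_apply, Fintype.sum_prod_type, starRingEnd_apply]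
  rw [Finset.sum_comm]
  exact Finset.sum_congr rfl fun _ _ => Finset.sum_congr rfl fun _ _ => mul_comm _ _

lemma emb_smul {d : ℕ} (c : ℂ) (M : Matrix (Fin d) (Fin d) ℂ) :
    emb (c • M) = c • emb M := rfl

lemma emb_inj {d : ℕ} {M N : Matrix (Fin d) (Fin d) ℂ} (h : emb M = emb N) : M = N := by
  ext i j
  simpa [emb] using congrArg (fun v : EuclideanSpace ℂ (Fin d × Fin d) => v (i, j)) h

/-- If ρ is positive definite, V ≠ 0, tr(ρ^{1/2}V*ρ^{1/2}V) is real and positive,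
equality holds in the Schwarz inequality tr(ρ^{1/2}V*ρ^{1/2}V)² = tr(ρV*V)·tr(ρVV*), and
γ⁻, γ⁺ > 0 satisfy γ⁻·tr(ρV*V) = γ⁺·tr(ρVV*), then (γ⁺)^{1/2}ρ^{1/2}V = (γ⁻)^{1/2}Vρ^{1/2}. -/
theorem sqrt_intertwining_of_schwarz_equality (d : ℕ) (ρ : Matrix (Fin d) (Fin d) ℂ)
    (hρ : ρ.PosDef) (V : Matrix (Fin d) (Fin d) ℂ) (hV : V ≠ 0)
    (hreal : ((hρ.posSemidef.sqrt * Vᴴ * hρ.posSemidef.sqrt * V).trace).im = 0)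
    (hpos : 0 < ((hρ.posSemidef.sqrt * Vᴴ * hρ.posSemidef.sqrt * V).trace).re)
    (heq : ((hρ.posSemidef.sqrt * Vᴴ * hρ.posSemidef.sqrt * V).trace) ^ 2
      = (ρ * Vᴴ * V).trace * (ρ * V * Vᴴ).trace)
    (γm γp : ℝ) (hγm : 0 < γm) (hγp : 0 < γp)
    (hγ : (γm : ℂ) * (ρ * Vᴴ * V).trace = (γp : ℂ) * (ρ * V * Vᴴ).trace) :
    (Real.sqrt γp : ℂ) • (hρ.posSemidef.sqrt * V)
      = (Real.sqrt γm : ℂ) • (V * hρ.posSemidef.sqrt) := by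
  set S := hρ.posSemidef.sqrt with hSdef
  have hS : Sᴴ = S := psd_sqrt_herm hρ.posSemidef
  have hSS : S * S = ρ := psd_sqrt_mul_self hρ.posSemidef
  set x : EuclideanSpace ℂ (Fin d × Fin d) := emb (S * V) with hxdef
  set y : EuclideanSpace ℂ (Fin d × Fin d) := emb (V * S) with hydef
  set a := ‖x‖ with hadef
  set b := ‖y‖ with hbdef
  -- the three trace identities
  have hxy : (inner ℂ x y : ℂ) = (S * Vᴴ * S * V).trace := by
    rw [hxdef, hydef, inner_emb, conjTranspose_mul, hS, ← mul_assoc,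
      Matrix.trace_mul_comm, ← mul_assoc, ← mul_assoc]
  have htrx : (inner ℂ x x : ℂ) = (ρ * V * Vᴴ).trace := by
    rw [hxdef, inner_emb, conjTranspose_mul, hS, ← mul_assoc, mul_assoc Vᴴ S S, hSS,
      Matrix.trace_mul_cycle, Matrix.trace_mul_cycle]
  have hxx : (ρ * V * Vᴴ).trace = ((a : ℂ)) ^ 2 := by
    rw [← htrx]; exact_mod_cast inner_self_eq_norm_sq_to_K (𝕜 := ℂ) x
  have htry : (inner ℂ y y : ℂ) = (ρ * Vᴴ * V).trace := by
    rw [hydef, inner_emb, conjTranspose_mul, hS, ← mul_assoc, Matrix.trace_mul_cycle,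
      ← mul_assoc, hSS]
  have hyy : (ρ * Vᴴ * V).trace = ((b : ℂ)) ^ 2 := by
    rw [← htry]; exact_mod_cast inner_self_eq_norm_sq_to_K (𝕜 := ℂ) y
  -- x ≠ 0, a > 0
  have hSV : S * V ≠ 0 := by
    intro h
    apply hV
    have hρV : ρ * V = 0 := by rw [← hSS, mul_assoc, h, mul_zero]
    have hdet : IsUnit ρ.det := isUnit_iff_ne_zero.2 (ne_of_gt (by exact_mod_cast hρ.det_pos))
    calc V = ρ⁻¹ * (ρ * V) := by rw [← mul_assoc, nonsing_inv_mul ρ hdet, one_mul]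
    _ = 0 := by rw [hρV, mul_zero]
  have hx0 : x ≠ 0 := fun h => hSV (emb_inj (h.trans rfl))
  have ha : 0 < a := norm_pos_iff.2 hx0
  have hb : 0 ≤ b := norm_nonneg y
  -- equality case
  set t := (S * Vᴴ * S * V).trace with htdef
  have ht : t = (t.re : ℂ) := (Complex.ext_iff).2 ⟨rfl, by simpa using hreal⟩
  have heq2 : ((t.re : ℂ)) ^ 2 = (((a * b : ℝ)) : ℂ) ^ 2 := by
    rw [← ht, heq, hxx, hyy]; push_cast; ring
  have heqR : t.re ^ 2 = (a * b) ^ 2 := by exact_mod_cast heq2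
  have htab : t.re = a * b := by nlinarith [mul_nonneg ha.le hb]
  have hinner : (inner ℂ x y : ℂ) = ((a : ℂ)) * ((b : ℂ)) := by
    rw [hxy, ht, htab]; push_cast; ring
  have hkey : ((b : ℂ)) • x = ((a : ℂ)) • y := inner_eq_norm_mul_iff.1 hinner
  have hkeyM : ((b : ℂ)) • (S * V) = ((a : ℂ)) • (V * S) := by
    apply emb_inj; rw [emb_smul, emb_smul]; exact hkey
  -- relation between norms and rates
  have hγR : γm * b ^ 2 = γp * a ^ 2 := by
    have : (γm : ℂ) * ((b : ℂ)) ^ 2 = (γp : ℂ) * ((a : ℂ)) ^ 2 := by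
      rw [← hxx, ← hyy]; exact hγ
    exact_mod_cast this
  have hsq : Real.sqrt γm * b = Real.sqrt γp * a := by
    have h1 : Real.sqrt (γm * b ^ 2) = Real.sqrt (γp * a ^ 2) := by rw [hγR]
    rwa [Real.sqrt_mul hγm.le, Real.sqrt_sq hb, Real.sqrt_mul hγp.le,
      Real.sqrt_sq ha.le] at h1
  -- conclude
  have ha0 : ((a : ℂ)) ≠ 0 := by exact_mod_cast ha.ne'
  apply smul_right_injective (Matrix (Fin d) (Fin d) ℂ) ha0
  show ((a : ℂ)) • ((Real.sqrt γp : ℂ) • (S * V)) = ((a : ℂ)) • ((Real.sqrt γm : ℂ) • (V * S))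
  calc ((a : ℂ)) • ((Real.sqrt γp : ℂ) • (S * V))
      = (((Real.sqrt γp * a : ℝ)) : ℂ) • (S * V) := by
        rw [smul_smul]; push_cast; ring_nf
    _ = (((Real.sqrt γm * b : ℝ)) : ℂ) • (S * V) := by rw [hsq]
    _ = (Real.sqrt γm : ℂ) • (((b : ℂ)) • (S * V)) := by rw [smul_smul]; push_cast; ring_nf
    _ = (Real.sqrt γm : ℂ) • (((a : ℂ)) • (V * S)) := by rw [hkeyM]
    _ = ((a : ℂ)) • ((Real.sqrt γm : ℂ) • (V * S)) := by rw [smul_smul, smul_smul, mul_comm]
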